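/- Let p be a prime with p ≡ 3 (mod 4), let n be an odd integer greater than 1 with (p, n) ≠ (3, 5), let d0 be the squarefree part of 1 − p^n and c the positive integer with 1 − p^n = c^2·d0 (so d0 ≡ 2 (mod 4) is the squarefree part and c^2·d0 = 1 − p^n). Then for any prime p4 dividing n, there are no integers u, v and sign ε ∈ {+1, −1} such that (u + v·√d0)^{p4} = ε·(1 + c·√d0) in ℤ[√d0]. -/

import Mathlib

set_option linter.unreachableTactic false
set_option linter.unusedTactic false


/-- Pell solution sequence for `x z² = 1 + (x-1) y²`. -/
def pellZ (x : ℤ) : ℕ → ℤ × ℤ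
  | 0 => (1, 1)
  | (k+1) =>
      ((2*x-1)*(pellZ x k).1 + 2*(x-1)*(pellZ x k).2,
        2*x*(pellZ x k).1 + (2*x-1)*(pellZ x k).2)

lemma pell_growth (x : ℤ) (hx : 3 ≤ x) :
    ∀ k, (3*x)^k ≤ (pellZ x k).1 ∧ (pellZ x k).1 ≤ (pellZ x k).2 := by
  intro k
  induction k with
  | zero => simp [pellZ]
  | succ k ih =>
    obtain ⟨h1, h2⟩ := ih
    have hZpos : (1:ℤ) ≤ (pellZ x k).1 := le_trans (one_le_pow₀ (by nlinarith)) h1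
    constructor
    · show (3*x)^(k+1) ≤ (2*x-1)*(pellZ x k).1 + 2*(x-1)*(pellZ x k).2
      have : (3*x)^(k+1) = (3*x) * (3*x)^k := by ring
      rw [this]
      nlinarith [h1, h2, hZpos]
    · show (2*x-1)*(pellZ x k).1 + 2*(x-1)*(pellZ x k).2
        ≤ 2*x*(pellZ x k).1 + (2*x-1)*(pellZ x k).2
      nlinarith [h1, h2, hZpos]

lemma pellZ_one (x : ℤ) : (pellZ x 1).1 = 4*x - 3 := by
  show (2*x-1)*1 + 2*(x-1)*1 = 4*x-3
  ring




set_option maxHeartbeats 1000000 in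
lemma pell_classify (x : ℤ) (hx : 3 ≤ x) :
    ∀ B : ℕ, ∀ z y : ℤ, 1 ≤ z → 1 ≤ y → y ≤ (B:ℤ) → x*z^2 = 1 + (x-1)*y^2 →
      ∃ k, z = (pellZ x k).1 ∧ y = (pellZ x k).2 := by
  intro B
  induction B with
  | zero => intro z y hz hy hB _; omega
  | succ B ih =>
    intro z y hz hy hB heq
    rcases eq_or_lt_of_le hy with hy1 | hy2
    · -- y = 1, so z = 1
      refine ⟨0, ?_, ?_⟩
      · have hz2 : x * z^2 = x * 1 := by rw [heq, ← hy1]; ring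
        have hzsq : z^2 = 1 := by
          have hx0 : x ≠ 0 := by omega
          exact mul_left_cancel₀ hx0 hz2
        show z = 1
        nlinarith [hzsq, hz]
      · exact hy1.symm
    · -- y ≥ 2
      have hy2' : 2 ≤ y := hy2
      -- exclude y² ≤ 4x
      have hy4x : 4*x < y^2 := by
        by_contra hle
        push_neg at hle
        -- L := y² - z², x * L = y² - 1
        have hL : x * (y^2 - z^2) = y^2 - 1 := by linarith [heq]
        have hLpos : 1 ≤ y^2 - z^2 := by nlinarith [hL]
        have hzy : z < y := by nlinarith [hLpos, hz, hy2']
        have hL3 : y^2 - z^2 ≤ 3 := by nlinarith [hL, hle]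
        -- (y-z)(y+z) ≤ 3 with y-z ≥ 1, y+z ≥ 3 forces y=2, z=1, x=1
        have h1 : 1 ≤ y - z := by omega
        have h2 : 3 ≤ y + z := by omega
        have hprod : (y-z)*(y+z) ≤ 3 := by nlinarith [hL3]
        have hyz1 : y - z = 1 := by nlinarith [h1, h2, hprod]
        have hyz3 : y + z = 3 := by nlinarith [h1, h2, hprod, hyz1]
        have hy2e : y = 2 := by omega
        have hze : z = 1 := by omega
        rw [hy2e, hze] at heq
        nlinarith [heq]
      -- descent
      set z' := (2*x-1)*z - 2*(x-1)*y with hz'def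
      set y' := (2*x-1)*y - 2*x*z with hy'def
      have heq' : x*z'^2 = 1 + (x-1)*y'^2 := by
        rw [hz'def, hy'def]; linear_combination (4*x^2-4*x+1)*heq - (4*x^2 - 4*x)*heq
      have hz'pos : 1 ≤ z' := by
        rcases le_or_gt 1 z' with h | h
        · exact h
        · exfalso
          have hle : (2*x-1)*z ≤ 2*(x-1)*y := by omega
          have hnn : 0 ≤ (2*x-1)*z := by nlinarith [hz]
          have hsq : ((2*x-1)*z)*((2*x-1)*z) ≤ (2*(x-1)*y)*(2*(x-1)*y) :=
            mul_self_le_mul_self hnn hle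
          nlinarith [hsq, heq, hz, hy2']
      have hy'pos : 1 ≤ y' := by
        rcases le_or_gt 1 y' with h | h
        · exact h
        · exfalso
          have hle : (2*x-1)*y ≤ 2*x*z := by omega
          have hnn : 0 ≤ (2*x-1)*y := by nlinarith [hy2']
          have hsq : ((2*x-1)*y)*((2*x-1)*y) ≤ (2*x*z)*(2*x*z) :=
            mul_self_le_mul_self hnn hle
          nlinarith [hsq, heq, hy4x]
      have hy'lt : y' < y := by
        have hkey : (x-1)*y < x*z := by
          rcases le_or_gt (x*z) ((x-1)*y) with h | h
          · exfalso
            have hnn : 0 ≤ x*z := by nlinarith [hz]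
            have hsq : (x*z)*(x*z) ≤ ((x-1)*y)*((x-1)*y) :=
              mul_self_le_mul_self hnn h
            nlinarith [hsq, heq, hy2']
          · exact h
        have hident : y' = y + 2*((x-1)*y - x*z) := by rw [hy'def]; ring
        linarith [hident, hkey]
      have hy'B : y' ≤ (B:ℤ) := by
        have : y ≤ (B:ℤ) + 1 := by exact_mod_cast hB
        omega
      obtain ⟨k, hk1, hk2⟩ := ih z' y' hz'pos hy'pos hy'B heq'
      refine ⟨k+1, ?_, ?_⟩
      · show z = (2*x-1)*(pellZ x k).1 + 2*(x-1)*(pellZ x k).2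
        rw [← hk1, ← hk2, hz'def, hy'def]; ring
      · show y = 2*x*(pellZ x k).1 + (2*x-1)*(pellZ x k).2
        rw [← hk1, ← hk2, hz'def, hy'def]; ring





/-- real-part additive hom -/
def reAddHom (d : ℤ) : ℤ√d →+ ℤ where
  toFun := Zsqrtd.re
  map_zero' := rfl
  map_add' := fun _ _ => rfl

lemma hpow_eq (x : ℤ) :
    ∀ k, (⟨x,1⟩ : ℤ√(x*(x-1)))^(2*k+1)
      = ⟨x^(k+1)*(pellZ x k).1, x^k*(pellZ x k).2⟩ := by
  intro k
  induction k with
  | zero => simp [pellZ]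
  | succ k ih =>
    have h2 : 2*(k+1)+1 = (2*k+1) + 2 := by ring
    rw [h2, pow_add, ih, sq]
    show (⟨x ^ (k + 1) * (pellZ x k).1, x ^ k * (pellZ x k).2⟩ : ℤ√(x*(x-1)))
        * (⟨x,1⟩ * ⟨x,1⟩) = _
    have hsq : (⟨x,1⟩ : ℤ√(x*(x-1))) * ⟨x,1⟩ = ⟨x*x + x*(x-1), x + x⟩ := by
      ext <;> simp [Zsqrtd.re_mul, Zsqrtd.im_mul] <;> ring
    rw [hsq]
    ext
    · show _ * (x*x + x*(x-1)) + (x*(x-1)) * (x ^ k * (pellZ x k).2) * (x+x)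
        = x^(k+1+1) * ((2*x-1)*(pellZ x k).1 + 2*(x-1)*(pellZ x k).2)
      ring
    · show (x ^ (k + 1) * (pellZ x k).1) * (x+x) + (x ^ k * (pellZ x k).2) * (x*x + x*(x-1))
        = x^(k+1) * (2*x*(pellZ x k).1 + (2*x-1)*(pellZ x k).2)
      ring

lemma spow_even (D : ℤ) (i : ℕ) : (⟨0,1⟩ : ℤ√D)^(2*i) = ((D:ℤ) : ℤ√D)^i := by
  induction i with
  | zero => simp
  | succ i ih =>
    have h2 : 2*(i+1) = 2*i + 2 := by ring
    have hs : (⟨0,1⟩ : ℤ√D)^2 = ((D:ℤ) : ℤ√D) := by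
      rw [sq]; ext <;> simp [Zsqrtd.re_mul, Zsqrtd.im_mul]
    rw [h2, pow_add, ih, hs, pow_succ]

lemma intCast_pow_zsqrtd (D a : ℤ) (i : ℕ) :
    ((a:ℤ√D))^i = (((a^i):ℤ) : ℤ√D) :=
  (map_pow (Int.castRingHom (ℤ√D)) a i).symm

lemma spow_odd (D : ℤ) (i : ℕ) : (⟨0,1⟩ : ℤ√D)^(2*i+1) = ⟨0, D^i⟩ := by
  rw [pow_add, spow_even, pow_one, intCast_pow_zsqrtd]
  ext
  · rw [Zsqrtd.re_mul, Zsqrtd.re_intCast, Zsqrtd.im_intCast]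
    show D ^ i * 0 + D * 0 * 1 = 0
    ring
  · rw [Zsqrtd.im_mul, Zsqrtd.re_intCast, Zsqrtd.im_intCast]
    show D ^ i * 1 + 0 * 0 = D ^ i
    ring

lemma sum_range_two_mul (K : ℕ) (f : ℕ → ℤ) :
    ∑ t ∈ Finset.range (2*K), f t = ∑ j ∈ Finset.range K, (f (2*j) + f (2*j+1)) := by
  induction K with
  | zero => simp
  | succ K ih =>
    have h2 : 2*(K+1) = (2*K + 1) + 1 := by ring
    rw [h2, Finset.sum_range_succ, Finset.sum_range_succ, Finset.sum_range_succ, ih]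
    ring

lemma term_re_odd (d a b : ℤ) (cN : ℕ) :
    (((a : ℤ√d)) * (⟨0, b⟩ : ℤ√d) * (cN : ℤ√d)).re = 0 := by
  simp [Zsqrtd.re_mul, Zsqrtd.im_mul, Zsqrtd.re_intCast, Zsqrtd.im_intCast,
    Zsqrtd.re_natCast, Zsqrtd.im_natCast]

lemma term_re_even (d a b : ℤ) (cN : ℕ) :
    (((a : ℤ√d)) * ((b : ℤ√d)) * (cN : ℤ√d)).re = a * b * cN := by
  simp [Zsqrtd.re_mul, Zsqrtd.im_mul, Zsqrtd.re_intCast, Zsqrtd.im_intCast,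
    Zsqrtd.re_natCast, Zsqrtd.im_natCast]

lemma hpow_re_sum (x : ℤ) (k : ℕ) :
    ((⟨x,1⟩ : ℤ√(x*(x-1)))^(2*k+1)).re
      = ∑ j ∈ Finset.range (k+1),
          ((2*k+1).choose (2*j+1) : ℤ) * x^(2*j+1) * (x*(x-1))^(k-j) := by
  set D := x*(x-1) with hD
  have hsplit : (⟨x,1⟩ : ℤ√D) = ((x:ℤ) : ℤ√D) + ⟨0,1⟩ := by
    ext <;> simp
  rw [hsplit, add_pow]
  rw [show (2*k+1+1) = 2*(k+1) by ring]
  have hre : (∑ m ∈ Finset.range (2*(k+1)),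
      ((x:ℤ):ℤ√D)^m * (⟨0,1⟩:ℤ√D)^(2*k+1-m) * ((2*k+1).choose m : ℤ√D)).re
      = ∑ m ∈ Finset.range (2*(k+1)),
        (((x:ℤ):ℤ√D)^m * (⟨0,1⟩:ℤ√D)^(2*k+1-m) * ((2*k+1).choose m : ℤ√D)).re :=
    map_sum (reAddHom D) _ _
  rw [hre, sum_range_two_mul]
  apply Finset.sum_congr rfl
  intro j hj
  have hjk : j ≤ k := by
    have := Finset.mem_range.mp hj; omega
  have he1 : 2*k+1 - 2*j = 2*(k-j)+1 := by omega
  have he2 : 2*k+1 - (2*j+1) = 2*(k-j) := by omega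
  rw [he1, he2, spow_odd, spow_even, intCast_pow_zsqrtd, intCast_pow_zsqrtd,
    intCast_pow_zsqrtd]
  rw [term_re_odd, term_re_even]
  ring



lemma three_pow_ge (w : ℕ) (hw : 2 ≤ w) : 2*w+5 ≤ 3^w := by
  induction w with
  | zero => omega
  | succ w ih =>
    rcases Nat.lt_or_ge w 2 with h | h
    · have hw1 : w = 1 := by omega
      subst hw1; norm_num
    · have := ih h
      have h3 : 3^(w+1) = 3 * 3^w := by ring
      omega

lemma prime_ge_seven (p : ℕ) (hp : p.Prime) (hp3 : 3 ≤ p) (hp3' : p ≠ 3) (hp5 : p ≠ 5) :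
    7 ≤ p := by
  by_contra h
  push_neg at h
  interval_cases p
  · exact hp3' rfl
  · norm_num at hp
  · exact hp5 rfl
  · norm_num at hp

/-- Key valuation bound on the odd number `2j+1` for `j ≥ 2`. -/
lemma val_bound (p : ℕ) (hp : p.Prime) (hp3 : 3 ≤ p) (hp5 : p ≠ 5)
    (j : ℕ) (hj2 : 2 ≤ j) : (2*j+1).factorization p + 2 ≤ j := by
  set w := (2*j+1).factorization p with hw
  rcases Nat.eq_zero_or_pos w with h0 | hpos
  · omega
  have hne : (2*j+1) ≠ 0 := by omega
  have hdvd : p^w ∣ 2*j+1 := Nat.ordProj_dvd _ _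
  have hle : p^w ≤ 2*j+1 := Nat.le_of_dvd (by omega) hdvd
  rcases Nat.lt_or_ge w 2 with hw1 | hw2
  · -- w = 1
    have hw1' : w = 1 := by omega
    rcases eq_or_ne p 3 with rfl | hp3'
    · -- p = 3 : 3 ∣ 2j+1 but ¬ 9 ∣ 2j+1
      have h3 : 3 ∣ 2*j+1 := by
        have h := hdvd; rw [hw1', pow_one] at h; exact h
      have h9 : ¬ ((3:ℕ)^2 ∣ 2*j+1) := by
        have h := Nat.pow_succ_factorization_not_dvd hne hp
        rw [← hw, hw1'] at h
        exact h
      have h9' : ¬ (9 ∣ 2*j+1) := by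
        intro hcon; exact h9 (by norm_num at hcon ⊢; exact hcon)
      omega
    · have hp7 : 7 ≤ p := prime_ge_seven p hp hp3 hp3' hp5
      have h7 : 7 ≤ 2*j+1 := by
        calc (7:ℕ) ≤ p := hp7
        _ = p^1 := (pow_one p).symm
        _ ≤ p^w := Nat.pow_le_pow_right (by omega) (by omega)
        _ ≤ 2*j+1 := hle
      omega
  · -- w ≥ 2
    have h3w : 3^w ≤ p^w := Nat.pow_le_pow_left hp3 w
    have := three_pow_ge w hw2
    omega

/-- `N * C(N-1, r) = (r+1) * C(N, r+1)` for `N ≥ 1`. -/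
lemma choose_mul_id (N r : ℕ) (hN : 1 ≤ N) :
    N * (N-1).choose r = (r+1) * N.choose (r+1) := by
  have h := Nat.add_one_mul_choose_eq (N-1) r
  have h1 : N-1+1 = N := by omega
  rw [h1] at h
  rw [h]
  have : r.succ = r + 1 := rfl
  ring

lemma choose_three_id (k : ℕ) (hk : 1 ≤ k) :
    6 * (2*k+1).choose 3 = (2*k+1)*(2*k)*(2*k-1) := by
  have h1 : (2*k+1) * (2*k).choose 2 = 3 * (2*k+1).choose 3 := by
    have := choose_mul_id (2*k+1) 2 (by omega)
    simpa using this
  have h2 : (2*k) * (2*k-1).choose 1 = 2 * (2*k).choose 2 := by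
    have := choose_mul_id (2*k) 1 (by omega)
    simpa using this
  have h3 : (2*k-1).choose 1 = 2*k-1 := Nat.choose_one_right _
  rw [h3] at h2
  calc 6 * (2*k+1).choose 3 = 2 * (3 * (2*k+1).choose 3) := by ring
  _ = 2 * ((2*k+1) * (2*k).choose 2) := by rw [h1]
  _ = (2*k+1) * (2 * (2*k).choose 2) := by ring
  _ = (2*k+1) * ((2*k) * (2*k-1)) := by rw [← h2]
  _ = (2*k+1)*(2*k)*(2*k-1) := by ring

/-- Divisibility of the lower binomial terms. -/
lemma term_dvd (p m : ℕ) (hp : p.Prime) (hp3 : 3 ≤ p) (hp5 : p ≠ 5) (hm : 1 ≤ m)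
    (k a : ℕ) (ha : p^a ∣ (2*k+1)) (j : ℕ) (hj2 : 2 ≤ j) (hjk : j ≤ k) :
    p^(a + m*(k+1) + 2) ∣
      (2*k+1).choose (2*j+1) * (p^m)^(2*j+1) * ((p^m)*((p^m)-1))^(k-j) := by
  set N := 2*k+1 with hN
  set C := N.choose (2*j+1) with hC
  set w := (2*j+1).factorization p with hw
  have hwj : w + 2 ≤ j := val_bound p hp hp3 hp5 j hj2
  have hmj : j ≤ m * j := Nat.le_mul_of_pos_left j (by omega)
  -- rewrite the x-powers
  have hXsplit : ((p^m)*((p^m)-1))^(k-j) = (p^m)^(k-j) * ((p^m)-1)^(k-j) := mul_pow _ _ _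
  have e1 : ((p:ℕ)^m)^(2*j+1) = p^(m*(2*j+1)) := by rw [← pow_mul]
  have e2 : ((p:ℕ)^m)^(k-j) = p^(m*(k-j)) := by rw [← pow_mul]
  have hsum : m*(2*j+1) + m*(k-j) = m*(k+j+1) := by
    have : (2*j+1) + (k-j) = k+j+1 := by omega
    rw [← Nat.mul_add, this]
  have hprod : C * (p^m)^(2*j+1) * ((p^m)*((p^m)-1))^(k-j)
      = (C * ((p^m)-1)^(k-j)) * p^(m*(k+j+1)) := by
    rw [hXsplit, e1, e2, ← hsum, pow_add]
    ring
  rw [hprod]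
  have hmkj : m*(k+j+1) = m*(k+1) + m*j := by ring
  rcases le_or_gt a w with haw | hwa
  · -- a ≤ w : the pure p-power factor suffices
    have hexp : a + m*(k+1) + 2 ≤ m*(k+j+1) := by omega
    exact dvd_mul_of_dvd_right (pow_dvd_pow p hexp) _
  · -- w < a : extract p-power from the binomial coefficient
    have hCne : C ≠ 0 := by
      have : 2*j+1 ≤ N := by omega
      simpa [hC] using Nat.choose_pos this |>.ne'
    have hNC : N * (N-1).choose (2*j) = (2*j+1) * C := by
      simpa [hC] using choose_mul_id N (2*j) (by omega)
    have hdvd1 : p^a ∣ (2*j+1) * C := by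
      rw [← hNC]
      exact Dvd.dvd.mul_right ha _
    -- split (2j+1) = p^w * s with p ∤ s
    have hone : (2*j+1) ≠ 0 := by omega
    have hps : (2*j+1) = p^w * ordCompl[p] (2*j+1) := (Nat.ordProj_mul_ordCompl_eq_self _ _).symm
    have hns : ¬ p ∣ ordCompl[p] (2*j+1) := Nat.not_dvd_ordCompl hp hone
    have hdvd2 : p^w * p^(a-w) ∣ p^w * (ordCompl[p] (2*j+1) * C) := by
      rw [← pow_add]
      have : w + (a-w) = a := by omega
      rw [this, ← mul_assoc, ← hps]
      exact hdvd1
    have hdvd3 : p^(a-w) ∣ ordCompl[p] (2*j+1) * C :=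
      (Nat.mul_dvd_mul_iff_left (pow_pos hp.pos w)).mp hdvd2
    have hcop : Nat.Coprime (p^(a-w)) (ordCompl[p] (2*j+1)) :=
      Nat.Coprime.pow_left _ ((Nat.Prime.coprime_iff_not_dvd hp).mpr hns)
    have hdvdC : p^(a-w) ∣ C := hcop.dvd_of_dvd_mul_left hdvd3
    have hexp : a + m*(k+1) + 2 ≤ (a-w) + m*(k+j+1) := by omega
    calc p^(a + m*(k+1) + 2) ∣ p^((a-w) + m*(k+j+1)) := pow_dvd_pow p hexp
    _ = p^(a-w) * p^(m*(k+j+1)) := pow_add p _ _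
    _ ∣ (C * ((p^m)-1)^(k-j)) * p^(m*(k+j+1)) :=
        mul_dvd_mul (hdvdC.mul_right _) dvd_rfl

lemma nine_not_dvd (k : ℕ) (hk : 1 ≤ k) : ¬ (9 ∣ 4 + 2*k*(2*k-1)) := by
  intro h
  obtain ⟨t, rfl⟩ : ∃ t, k = t + 1 := ⟨k-1, by omega⟩
  have h2 : 2*(t+1)-1 = 2*t+1 := by omega
  rw [h2] at h
  have hexp : 4 + 2*(t+1)*(2*t+1) = 4*(t*t) + 6*t + 6 := by ring
  rw [hexp] at h
  have h3' : (3:ℕ) ∣ 4*(t*t) + 6*t + 6 := dvd_trans (by norm_num) h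
  have htt : (3:ℕ) ∣ t*t := by omega
  have h3t : (3:ℕ) ∣ t := ((Nat.Prime.dvd_mul (by norm_num)).mp htt).elim id id
  obtain ⟨s, rfl⟩ := h3t
  have hid : 4*((3*s)*(3*s)) + 6*(3*s) + 6 = 9*(4*(s*s)+2*s) + 6 := by ring
  rw [hid] at h
  omega

/-- The main indivisibility claim for `W = N(x-1) + C(N,3) x`. -/
lemma W_not_dvd (p m : ℕ) (hp : p.Prime) (hp3 : 3 ≤ p) (hm : 1 ≤ m)
    (k : ℕ) (hk : 1 ≤ k) :
    ¬ p^((2*k+1).factorization p + 2) ∣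
      ((2*k+1)*((p^m)-1) + (2*k+1).choose 3 * (p^m)) := by
  intro hdvd
  set N := 2*k+1 with hN
  set x := p^m with hx
  set a := N.factorization p with ha
  set W := N*(x-1) + N.choose 3 * x with hW
  set W₂ := 6*(x-1) + (2*k)*(2*k-1)*x with hW₂
  have hp2 := hp.two_le
  have hxpos : 3 ≤ x := by
    calc (3:ℕ) ≤ p := hp3
    _ = p^1 := (pow_one p).symm
    _ ≤ p^m := Nat.pow_le_pow_right (by omega) hm
  have hpx : p ∣ x := dvd_pow_self p (by omega)
  have hpx1 : ¬ p ∣ (x - 1) := by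
    intro hcon
    have h1 : p ∣ x - (x-1) := Nat.dvd_sub hpx hcon
    have hone : x - (x-1) = 1 := by omega
    rw [hone] at h1
    have := Nat.le_of_dvd one_pos h1
    omega
  have hNne : N ≠ 0 := by omega
  have h6W : 6 * W = N * W₂ := by
    have h3 := choose_three_id k hk
    calc 6 * W = N * (6*(x-1)) + (6 * N.choose 3) * x := by rw [hW]; ring
    _ = N * (6*(x-1)) + (N*(2*k)*(2*k-1)) * x := by rw [← hN] at h3; rw [h3]
    _ = N * W₂ := by rw [hW₂]; ring
  have hNsplit : N = p^a * ordCompl[p] N := (Nat.ordProj_mul_ordCompl_eq_self N p).symm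
  have hNcop : ¬ p ∣ ordCompl[p] N := Nat.not_dvd_ordCompl hp hNne
  rcases eq_or_ne p 3 with rfl | hp3'
  · -- p = 3
    have h27 : (3:ℕ)^(a+3) ∣ 6 * W := by
      have h1 : (3:ℕ)^(a+3) = 3^(a+2) * 3 := by rw [pow_succ]
      have h2 : (3:ℕ)^(a+2) * 3 ∣ W * 3 := mul_dvd_mul hdvd dvd_rfl
      have h3 : W * 3 ∣ 6 * W := ⟨2, by ring⟩
      rw [h1]
      exact dvd_trans h2 h3
    rw [h6W, hNsplit] at h27
    have h27' : (3:ℕ)^a * 3^3 ∣ 3^a * (ordCompl[3] N * W₂) := by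
      have e : (3:ℕ)^a * 3^3 = 3^(a+3) := (pow_add 3 a 3).symm
      rw [e, mul_assoc] at *
      exact h27
    have h27'' : (3:ℕ)^3 ∣ ordCompl[3] N * W₂ :=
      (Nat.mul_dvd_mul_iff_left (pow_pos (by norm_num : (0:ℕ) < 3) a)).mp h27'
    have hcop : Nat.Coprime ((3:ℕ)^3) (ordCompl[3] N) :=
      Nat.Coprime.pow_left _ ((Nat.Prime.coprime_iff_not_dvd hp).mpr hNcop)
    have hW₂27 : (3:ℕ)^3 ∣ W₂ := hcop.dvd_of_dvd_mul_left h27''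
    have hW₂9 : (9:ℕ) ∣ W₂ := dvd_trans (by norm_num) hW₂27
    rcases eq_or_ne m 1 with rfl | hm2
    · -- m = 1, x = 3 : W₂ = 3*(4 + 2k(2k-1))
      have hx3 : x = 3 := by rw [hx, pow_one]
      have hWid : W₂ = 3 * (4 + 2*k*(2*k-1)) := by
        rw [hW₂, hx3]
        have : (3:ℕ) - 1 = 2 := rfl
        rw [this]
        ring
      have h9' : (9:ℕ) ∣ 3 * (4 + 2*k*(2*k-1)) := hWid ▸ hW₂9
      have h3' : (3:ℕ) ∣ 4 + 2*k*(2*k-1) := by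
        obtain ⟨c, hc⟩ := h9'
        exact ⟨c, by omega⟩
      have h9'' : (9:ℕ) ∣ 4 + 2*k*(2*k-1) := by
        -- from 27 ∣ W₂ = 3 * (...)
        have h27w : (27:ℕ) ∣ 3 * (4 + 2*k*(2*k-1)) := by
          rw [← hWid]; exact_mod_cast hW₂27
        obtain ⟨c, hc⟩ := h27w
        exact ⟨c, by omega⟩
      exact nine_not_dvd k hk h9''
    · -- m ≥ 2 : 9 ∣ x, so 9 ∣ 6(x-1), so 9 ∣ 6 : absurd
      have h9x : (9:ℕ) ∣ x := by
        have : (3:ℕ)^2 ∣ 3^m := pow_dvd_pow 3 (by omega)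
        simpa [hx] using this
      have h9t : (9:ℕ) ∣ (2*k)*(2*k-1)*x := Dvd.dvd.mul_left h9x _
      have h96 : (9:ℕ) ∣ 6*(x-1) := by
        have := Nat.dvd_sub hW₂9 h9t
        have he : W₂ - (2*k)*(2*k-1)*x = 6*(x-1) := by rw [hW₂]; omega
        rwa [he] at this
      have h96' : (9:ℕ) ∣ 6*x := by
        have : (9:ℕ) ∣ x := h9x
        exact Dvd.dvd.mul_left this 6
      have h9six : (9:ℕ) ∣ 6 := by
        have := Nat.dvd_sub h96' h96
        have he : 6*x - 6*(x-1) = 6 := by omega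
        rwa [he] at this
      norm_num at h9six
  · -- p ≠ 3 : p ∤ 6
    have hp6 : ¬ p ∣ 6 := by
      intro hcon
      have h23 : p ∣ 2 * 3 := by norm_num at hcon ⊢; exact hcon
      rcases (Nat.Prime.dvd_mul hp).mp h23 with h | h
      · have := Nat.le_of_dvd (by norm_num) h; omega
      · exact hp3' ((Nat.prime_dvd_prime_iff_eq hp (by norm_num)).mp h)
    have h2' : p^(a+2) ∣ 6 * W := Dvd.dvd.mul_left hdvd 6
    rw [h6W, hNsplit] at h2'
    have h2'' : p^a * p^2 ∣ p^a * (ordCompl[p] N * W₂) := by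
      have e : p^a * p^2 = p^(a+2) := (pow_add p a 2).symm
      rw [e, mul_assoc] at *
      exact h2'
    have h2''' : p^2 ∣ ordCompl[p] N * W₂ :=
      (Nat.mul_dvd_mul_iff_left (pow_pos hp.pos a)).mp h2''
    have hcop : Nat.Coprime (p^2) (ordCompl[p] N) :=
      Nat.Coprime.pow_left _ ((Nat.Prime.coprime_iff_not_dvd hp).mpr hNcop)
    have hW₂p2 : p^2 ∣ W₂ := hcop.dvd_of_dvd_mul_left h2'''
    have hW₂p : p ∣ W₂ := dvd_trans (dvd_pow_self p two_ne_zero) hW₂p2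
    have hpt : p ∣ (2*k)*(2*k-1)*x := Dvd.dvd.mul_left hpx _
    have hp6' : p ∣ 6*(x-1) := by
      have := Nat.dvd_sub hW₂p hpt
      have he : W₂ - (2*k)*(2*k-1)*x = 6*(x-1) := by rw [hW₂]; omega
      rwa [he] at this
    rcases (Nat.Prime.dvd_mul hp).mp hp6' with h | h
    · exact hp6 h
    · exact hpx1 h


set_option maxHeartbeats 1000000 in
lemma core (p m E : ℕ) (hp : p.Prime) (hp3 : 3 ≤ p) (hp5 : p ≠ 5) (hm : 1 ≤ m) (hE : 1 ≤ E)
    (k : ℕ) (hzk : ((p:ℤ))^E = (pellZ ((p:ℤ)^m) k).1) :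
    p = 3 ∧ m = 1 ∧ E = 2 := by
  have hp2 := hp.two_le
  set xZ : ℤ := (p:ℤ)^m with hxZ
  set xN : ℕ := p^m with hxN
  have hxNZ : (xN:ℤ) = xZ := by rw [hxN, hxZ]; push_cast; rfl
  have hxN3 : 3 ≤ xN := by
    calc (3:ℕ) ≤ p := hp3
    _ = p^1 := (pow_one p).symm
    _ ≤ p^m := Nat.pow_le_pow_right (by omega) hm
  have hx3 : (3:ℤ) ≤ xZ := by rw [← hxNZ]; exact_mod_cast hxN3
  -- the ℤ binomial identity
  have h2 := hpow_re_sum xZ k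
  rw [hpow_eq xZ k] at h2
  rw [← hzk] at h2
  -- h2 : xZ^(k+1) * (p:ℤ)^E = ∑ ...  (after simp on the mk.re)
  have h2' : xZ^(k+1) * (p:ℤ)^E = ∑ j ∈ Finset.range (k+1),
      ((2*k+1).choose (2*j+1) : ℤ) * xZ^(2*j+1) * (xZ*(xZ-1))^(k-j) := h2
  -- ℕ version
  have hxm1 : ((xN - 1 : ℕ) : ℤ) = xZ - 1 := by
    rw [Nat.cast_sub (by omega)]; rw [hxNZ]; norm_num
  have key : p^(m*(k+1)+E) = ∑ j ∈ Finset.range (k+1),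
      (2*k+1).choose (2*j+1) * xN^(2*j+1) * (xN*(xN-1))^(k-j) := by
    have hc1 : ((p^(m*(k+1)+E) : ℕ) : ℤ) = xZ^(k+1) * (p:ℤ)^E := by
      push_cast
      rw [pow_add, pow_mul]
    have hc2 : ((∑ j ∈ Finset.range (k+1),
        (2*k+1).choose (2*j+1) * xN^(2*j+1) * (xN*(xN-1))^(k-j) : ℕ) : ℤ)
        = ∑ j ∈ Finset.range (k+1),
        ((2*k+1).choose (2*j+1) : ℤ) * xZ^(2*j+1) * (xZ*(xZ-1))^(k-j) := by
      push_cast [hxm1]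
      apply Finset.sum_congr rfl
      intro j _
      rw [hxNZ]
    have := hc1.trans (h2'.trans hc2.symm)
    exact_mod_cast this
  -- growth bound
  have hgrowZ := (pell_growth xZ hx3 k).1
  rw [← hzk] at hgrowZ
  have hgrow : (3*xN)^k ≤ p^E := by
    have : ((3*xN:ℕ):ℤ)^k ≤ ((p^E : ℕ) : ℤ) := by
      push_cast [hxNZ]
      exact_mod_cast hgrowZ
    exact_mod_cast this
  -- case k = 0
  rcases Nat.eq_zero_or_pos k with rfl | hk1
  · exfalso
    rw [Finset.sum_range_one] at key
    norm_num at key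
    rw [hxN] at key
    have hinj := Nat.pow_right_injective hp2 key
    omega
  -- k ≥ 1
  obtain ⟨K, rfl⟩ : ∃ K, k = K + 1 := ⟨k-1, by omega⟩
  set k := K + 1 with hkdef
  set N := 2*k+1 with hNdef
  set a := N.factorization p with hadef
  have haN : p^a ∣ N := Nat.ordProj_dvd _ _
  have hpxN : p ∣ xN := dvd_pow_self p (by omega)
  have hpx1 : ¬ p ∣ (xN - 1) := by
    intro hcon
    have h1 : p ∣ xN - (xN-1) := Nat.dvd_sub hpxN hcon
    have hone : xN - (xN-1) = 1 := by omega
    rw [hone] at h1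
    have := Nat.le_of_dvd one_pos h1
    omega
  -- E ≤ a + 1
  have hEa : E ≤ a + 1 := by
    by_contra hcon
    push_neg at hcon
    have hdvdSB : p^(a + m*(k+1) + 2) ∣ p^(m*(k+1)+E) := pow_dvd_pow _ (by omega)
    rw [key] at hdvdSB
    set f : ℕ → ℕ := fun j => (2*k+1).choose (2*j+1) * xN^(2*j+1) * (xN*(xN-1))^(k-j) with hf
    have hsplit : ∑ j ∈ Finset.range (k+1), f j
        = (∑ j ∈ Finset.range K, f (j+2)) + (f 1 + f 0) := by
      rw [Finset.sum_range_succ' f (K+1), Finset.sum_range_succ' (fun j => f (j+1)) K]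
      ring
    rw [hsplit] at hdvdSB
    have hdvdR : p^(a + m*(k+1) + 2) ∣ ∑ j ∈ Finset.range K, f (j+2) := by
      apply Finset.dvd_sum
      intro j hj
      have hj' := Finset.mem_range.mp hj
      exact term_dvd p m hp hp3 hp5 hm k a haN (j+2) (by omega) (by omega)
    have hdvd01 : p^(a + m*(k+1) + 2) ∣ f 1 + f 0 :=
      (Nat.dvd_add_right hdvdR).mp hdvdSB
    -- identity f1 + f0 = xN^(k+1) * ((xN-1)^K * W)
    set W := N*(xN-1) + N.choose 3 * xN with hWdef
    have hident : f 1 + f 0 = xN^(k+1) * ((xN-1)^K * W) := by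
      have hf0 : f 0 = N * xN^1 * (xN*(xN-1))^(K+1) := by
        rw [hf]
        simp only []
        rw [Nat.choose_one_right]
        congr 1
      have hf1 : f 1 = N.choose 3 * xN^3 * (xN*(xN-1))^K := by
        show (2*k+1).choose (2*1+1) * xN^(2*1+1) * (xN*(xN-1))^(k-1) = _
        have h1 : k - 1 = K := by omega
        rw [h1, ← hNdef]
      rw [hf0, hf1, hWdef]
      rw [mul_pow, mul_pow]
      rw [hkdef]
      ring_nf
    rw [hident] at hdvd01
    have hxpow : xN^(k+1) = p^(m*(k+1)) := by rw [hxN, ← pow_mul]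
    rw [hxpow] at hdvd01
    have hdvd01' : p^(m*(k+1)) * p^(a+2) ∣ p^(m*(k+1)) * ((xN-1)^K * W) := by
      have e : p^(m*(k+1)) * p^(a+2) = p^(a + m*(k+1) + 2) := by
        rw [← pow_add]; congr 1; omega
      rw [e]; exact hdvd01
    have hdvdW2 : p^(a+2) ∣ (xN-1)^K * W :=
      (Nat.mul_dvd_mul_iff_left (pow_pos hp.pos _)).mp hdvd01'
    have hcop : Nat.Coprime (p^(a+2)) ((xN-1)^K) :=
      Nat.Coprime.pow _ _ ((Nat.Prime.coprime_iff_not_dvd hp).mpr hpx1)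
    have hdvdW : p^(a+2) ∣ W := hcop.dvd_of_dvd_mul_left hdvdW2
    exact W_not_dvd p m hp hp3 hm k (by omega) hdvdW
  -- final size contradiction
  have ha_le : p^a ≤ N := Nat.le_of_dvd (by omega) haN
  have hpE : p^E ≤ p^(a+1) := Nat.pow_le_pow_right (by omega) (by omega)
  have hplex : p ≤ xN := by
    calc p = p^1 := (pow_one p).symm
    _ ≤ p^m := Nat.pow_le_pow_right (by omega) hm
  have hbound : p^E ≤ N * xN := by
    calc p^E ≤ p^(a+1) := hpE
    _ = p^a * p := by rw [pow_succ]
    _ ≤ N * xN := Nat.mul_le_mul ha_le hplex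
  rcases Nat.eq_zero_or_pos K with rfl | hK1
  · -- k = 1
    have hz1 : (p:ℤ)^E = 4*xZ - 3 := by rw [hzk, pellZ_one]
    have heq : p^E + 3 = 4*xN := by
      have : ((p^E : ℕ) : ℤ) + 3 = 4 * ((xN:ℕ):ℤ) := by
        push_cast [hxNZ]
        linarith [hz1]
      exact_mod_cast this
    have ha3 : a = (3:ℕ).factorization p := by rw [hadef, hNdef, hkdef]
    rcases eq_or_ne p 3 with rfl | hp3'
    · have ha1 : a = 1 := by
        rw [ha3]
        exact Nat.Prime.factorization_self (by norm_num)
      have hEle : E ≤ 2 := by omega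
      have hm1 : m = 1 := by
        by_contra hm2
        have h9 : 9 ≤ xN := by
          rw [hxN]
          calc (9:ℕ) = 3^2 := by norm_num
          _ ≤ 3^m := Nat.pow_le_pow_right (by omega) (by omega)
        have h3E : (3:ℕ)^E ≤ 9 := by
          calc (3:ℕ)^E ≤ 3^2 := Nat.pow_le_pow_right (by omega) hEle
          _ = 9 := by norm_num
        omega
      refine ⟨rfl, hm1, ?_⟩
      have hxN1 : xN = 3 := by rw [hxN, hm1, pow_one]
      rw [hxN1] at heq
      interval_cases E
      · norm_num at heq
      · rfl
    · have ha0 : a = 0 := by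
        rw [ha3]
        apply Nat.factorization_eq_zero_of_not_dvd
        intro hcon
        exact hp3' ((Nat.prime_dvd_prime_iff_eq hp (by norm_num)).mp hcon)
      have hEle : E ≤ 1 := by omega
      have hpEp : p^E ≤ p := by
        calc p^E ≤ p^1 := Nat.pow_le_pow_right (by omega) hEle
        _ = p := pow_one p
      omega
  · -- k ≥ 2
    exfalso
    have hk2 : 2 ≤ k := by omega
    have hNx : (3*xN)^k ≤ N * xN := le_trans hgrow hbound
    have hmulpow : (3*xN)^k = (3^k * xN^(k-1)) * xN := by
      rw [mul_pow, mul_assoc]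
      congr 1
    have hcancel : 3^k * xN^(k-1) ≤ N := by
      have h1 : (3^k * xN^(k-1)) * xN ≤ N * xN := by
        rw [← hmulpow]; exact hNx
      exact Nat.le_of_mul_le_mul_right h1 (by omega)
    have h3x : 3^(k-1) ≤ xN^(k-1) := Nat.pow_le_pow_left hxN3 _
    have h3k : 3^k * 3^(k-1) ≤ N := le_trans (Nat.mul_le_mul_left _ h3x) hcancel
    have h3sum : 3^k * 3^(k-1) = 3^(2*k-1) := by
      rw [← pow_add]; congr 1; omega
    have hklt : k < 3^k := Nat.lt_pow_self (n := k) (by norm_num)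
    have h2k1 : 2*k+1 < 3^(k+1) := by
      have : 3^(k+1) = 3*3^k := by ring
      omega
    have hle : 3^(k+1) ≤ 3^(2*k-1) := Nat.pow_le_pow_right (by norm_num) (by omega)
    rw [h3sum] at h3k
    omega


lemma zpow_odd (d w : ℤ) : ∀ j : ℕ, (⟨0,w⟩ : ℤ√d)^(2*j+1) = ⟨0, w^(2*j+1) * d^j⟩ := by
  intro j
  induction j with
  | zero => simp
  | succ j ih =>
    have h2 : 2*(j+1)+1 = (2*j+1) + 2 := by ring
    rw [h2, pow_add, ih, sq]
    have hsq : (⟨0,w⟩ : ℤ√d) * ⟨0,w⟩ = ⟨d*(w*w), 0⟩ := by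
      ext <;> simp [Zsqrtd.re_mul, Zsqrtd.im_mul] <;> ring
    rw [hsq]
    ext
    · rw [Zsqrtd.re_mul]
      show 0*(d*(w*w)) + d*(w^(2*j+1)*d^j)*0 = 0
      ring
    · rw [Zsqrtd.im_mul]
      show 0*0 + (w^(2*j+1)*d^j)*(d*(w*w)) = w^(2*(j+1)+1)*d^(j+1)
      ring


/-- Let `p` be a prime with `p ≡ 3 (mod 4)`, let `n` be an odd integer greater than `1` with
`(p, n) ≠ (3, 5)`, let `d0` be the squarefree part of `1 − p^n` and `c` the positive integer
with `1 − p^n = c^2·d0`. Then for any prime `p4` dividing `n`, there are no integers `u`, `v`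
and sign `ε ∈ {1, −1}` such that `(u + v·√d0)^p4 = ε·(1 + c·√d0)` in `ℤ[√d0]`. -/
theorem stmt_12 (p : ℕ) (hp : p.Prime) (hmod : p % 4 = 3)
    (n : ℕ) (hn : 1 < n) (hodd : Odd n) (hpn : (p, n) ≠ (3, 5))
    (d0 : ℤ) (hd0 : Squarefree d0) (c : ℤ) (hc : 0 < c)
    (hfac : (1 : ℤ) - (p : ℤ) ^ n = c ^ 2 * d0)
    (p4 : ℕ) (hp4 : p4.Prime) (hdvd : p4 ∣ n) :
    ¬ ∃ (u v ε : ℤ), (ε = 1 ∨ ε = -1) ∧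
      (⟨u, v⟩ : ℤ√d0) ^ p4 = (ε : ℤ√d0) * ⟨1, c⟩ := by
  rintro ⟨u, v, ε, hε, heq⟩
  have hp3 : 3 ≤ p := by
    have := hp.two_le
    omega
  have hp5 : p ≠ 5 := by
    rintro rfl
    norm_num at hmod
  -- p4 is odd, write p4 = 2*qq+1
  have hq2 : p4 ≠ 2 := by
    rintro rfl
    obtain ⟨t, ht⟩ := hdvd
    obtain ⟨s, hs⟩ := hodd
    omega
  have hqodd : Odd p4 := hp4.odd_of_ne_two hq2
  obtain ⟨qq, hqq⟩ : ∃ qq, p4 = 2*qq+1 := by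
    obtain ⟨qq, hqq⟩ := hqodd
    exact ⟨qq, by omega⟩
  have hq3 : 3 ≤ p4 := by
    have := hp4.two_le
    omega
  have hqq1 : 1 ≤ qq := by omega
  -- norms
  have hnormα : Zsqrtd.norm ((ε:ℤ√d0) * ⟨1, c⟩) = (p:ℤ)^n := by
    rw [Zsqrtd.norm_mul]
    have h1 : Zsqrtd.norm ((ε:ℤ√d0)) = 1 := by
      rcases hε with rfl | rfl <;> simp [Zsqrtd.norm_intCast]
    rw [h1, one_mul, Zsqrtd.norm_def]
    show 1*1 - d0 * c * c = (p:ℤ)^n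
    linear_combination hfac
  have hwq : (Zsqrtd.norm (⟨u,v⟩ : ℤ√d0))^p4 = (p:ℤ)^n := by
    rw [← hnormα, ← heq]
    exact (map_pow Zsqrtd.normMonoidHom _ _).symm
  set w : ℤ := Zsqrtd.norm (⟨u,v⟩ : ℤ√d0) with hwdef
  have hppos : (0:ℤ) < (p:ℤ)^n := by positivity
  have hwpos : 0 < w := by
    by_contra hcon
    push_neg at hcon
    have := hqodd.pow_nonpos hcon
    rw [hwq] at this
    omega
  -- w = p^m
  have hwnat : ((w.toNat : ℤ)) = w := Int.toNat_of_nonneg hwpos.le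
  have hwnq : (w.toNat)^p4 = p^n := by
    have : ((w.toNat^p4 : ℕ) : ℤ) = ((p^n : ℕ) : ℤ) := by
      push_cast [hwnat]
      exact hwq
    exact_mod_cast this
  have hdvdw : w.toNat ∣ p^n := by
    rw [← hwnq]
    exact dvd_pow_self _ (by omega)
  obtain ⟨m, hmn, hwm⟩ := (Nat.dvd_prime_pow hp).mp hdvdw
  have hnmq : m * p4 = n := by
    have h1 : (p^m)^p4 = p^n := by rw [← hwm]; exact hwnq
    rw [← pow_mul] at h1
    exact Nat.pow_right_injective hp.two_le h1
  have hm1 : 1 ≤ m := by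
    rcases Nat.eq_zero_or_pos m with rfl | h
    · omega
    · exact h
  -- u = ±1
  have hre_eq : ((⟨u,v⟩ : ℤ√d0)^p4).re = ε := by
    rw [heq, Zsqrtd.re_mul]
    simp [Zsqrtd.re_intCast, Zsqrtd.im_intCast]
  have hvre : ((⟨0,v⟩ : ℤ√d0)^p4).re = 0 := by
    rw [hqq, zpow_odd]
  have hu_dvd : u ∣ ε := by
    have hsub : (⟨u,v⟩:ℤ√d0) - ⟨0,v⟩ = ⟨u,0⟩ := by ext <;> simp
    have hdvd1 : (⟨u,0⟩ : ℤ√d0) ∣ (⟨u,v⟩:ℤ√d0)^p4 - (⟨0,v⟩:ℤ√d0)^p4 := by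
      rw [← hsub]
      exact sub_dvd_pow_sub_pow _ _ _
    obtain ⟨w', hw'⟩ := hdvd1
    refine ⟨w'.re, ?_⟩
    have := congrArg Zsqrtd.re hw'
    rw [Zsqrtd.re_sub, hre_eq, hvre, Zsqrtd.re_mul] at this
    simpa using this
  have hu1 : u = 1 ∨ u = -1 := by
    apply Int.isUnit_iff.mp
    apply isUnit_of_dvd_unit hu_dvd
    rcases hε with rfl | rfl
    · exact isUnit_one
    · exact IsUnit.neg isUnit_one
  have hu2 : u*u = 1 := by rcases hu1 with rfl | rfl <;> norm_num
  -- v ∣ c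
  have him : ∀ j : ℕ, v ∣ ((⟨u,v⟩ : ℤ√d0)^j).im := by
    intro j
    induction j with
    | zero => simp
    | succ j ih =>
      rw [pow_succ, Zsqrtd.im_mul]
      exact dvd_add (dvd_mul_left v _) (Dvd.dvd.mul_right ih u)
  have him_eq : ((⟨u,v⟩ : ℤ√d0)^p4).im = ε*c := by
    rw [heq, Zsqrtd.im_mul]
    simp [Zsqrtd.re_intCast, Zsqrtd.im_intCast]
  have hvc : v ∣ c := by
    have h1 : v ∣ ε*c := him_eq ▸ him p4
    rcases hε with rfl | rfl
    · simpa using h1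
    · rw [show (-1:ℤ)*c = -c by ring] at h1
      exact (dvd_neg).mp h1
  obtain ⟨A, hA⟩ := hvc
  -- the norm equation in explicit form
  have hxw : u*u - d0*(v*v) = ((p:ℤ))^m := by
    have h1 : w = ((p^m : ℕ) : ℤ) := by rw [← hwnat, hwm]
    have h2 : w = u*u - d0*(v*v) := by
      rw [hwdef, Zsqrtd.norm_def]
      ring
    rw [← h2, h1]
    push_cast
    rfl
  set X : ℤ := (p:ℤ)^m with hXdef
  have hX3 : (3:ℤ) ≤ X := by
    have h3 : (3:ℕ) ≤ p^m := by
      calc (3:ℕ) ≤ p := hp3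
      _ = p^1 := (pow_one p).symm
      _ ≤ p^m := Nat.pow_le_pow_right (by omega) hm1
    have : ((3:ℕ):ℤ) ≤ (((p^m):ℕ):ℤ) := by exact_mod_cast h3
    push_cast at this
    exact this
  have hd0v : d0*(v*v) = 1 - X := by
    rw [← hxw]
    linarith [hu2]
  -- the Pell equation
  have hpn_pow : ((p:ℤ))^n = X^p4 := by
    rw [hXdef, ← pow_mul, hnmq]
  have hAne : A ≠ 0 := by
    rintro rfl
    rw [mul_zero] at hA
    omega
  have hPell : X * (X^qq)^2 = 1 + (X-1) * |A|^2 := by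
    have hsq : |A|^2 = A^2 := sq_abs A
    rw [hsq]
    have hkey : 1 - X^p4 = (1-X) * A^2 := by
      have h1 : (1:ℤ) - X^p4 = c^2*d0 := by rw [← hpn_pow]; exact hfac
      rw [h1, hA]
      have : (v*A)^2*d0 = (d0*(v*v))*A^2 := by ring
      rw [this, hd0v]
    have hexp : X^p4 = X * (X^qq)^2 := by
      rw [hqq]
      rw [show 2*qq+1 = qq*2+1 by ring, pow_succ, pow_mul]
      ring
    linarith [hkey, hexp]
  -- apply Pell classification
  have hz_ge : (1:ℤ) ≤ X^qq := one_le_pow₀ (by linarith)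
  have hy_ge : (1:ℤ) ≤ |A| := by
    have := abs_pos.mpr hAne
    linarith
  have hy_le : |A| ≤ ((|A|.toNat : ℕ) : ℤ) := by
    rw [Int.toNat_of_nonneg (abs_nonneg A)]
  obtain ⟨k, hk1, _⟩ := pell_classify X hX3 (|A|.toNat) (X^qq) |A| hz_ge hy_ge hy_le hPell
  -- apply the core lemma
  have hzk : ((p:ℤ))^(m*qq) = (pellZ ((p:ℤ)^m) k).1 := by
    rw [← hXdef, ← hk1, hXdef, ← pow_mul]
  have hE1 : 1 ≤ m*qq := by
    have := Nat.mul_le_mul hm1 hqq1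
    omega
  obtain ⟨hp3e, hm1e, hE2⟩ := core p m (m*qq) hp hp3 hp5 hm1 hE1 k hzk
  -- conclude (p,n) = (3,5)
  apply hpn
  subst hm1e
  have hqq2 : qq = 2 := by omega
  have hn5 : n = 5 := by omega
  rw [hp3e, hn5]
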